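/- Let n ≥ 1, E = EuclideanSpace ℝ (Fin n), u : E → ℝ and x ∈ E. Assume: (i) u is C² on a neighborhood of x (ContDiffAt ℝ 2 u x); (ii) u is harmonic at x, i.e. ∑ᵢ D²u(x)[eᵢ, eᵢ] = 0, where (eᵢ) is the standard orthonormal basis of E and D²u = iteratedFDeriv ℝ 2 u; and (iii) the gradient ∇u(x) is nonzero. Then the map y ↦ ‖∇u(y)‖ is differentiable at x and its derivative satisfies ‖D(‖∇u‖)(x)‖² ≤ ((n−1)/n) · ∑ᵢ ∑ⱼ (D²u(x)[eᵢ, eⱼ])². -/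

import Mathlib

private lemma kato_sum_factor {n : ℕ} (f g : Fin n → ℝ) :
    ∑ i, ∑ j, f i * g j = (∑ i, f i) * (∑ j, g j) :=
  (Finset.sum_mul_sum _ _ _ _).symm

private lemma kato_matrix {n : ℕ} (hn : 1 ≤ n) (A : Fin n → Fin n → ℝ)
    (hsym : ∀ i j, A i j = A j i) (htr : ∑ i, A i i = 0)
    (w : Fin n → ℝ) (hw : ∑ i, (w i) ^ 2 = 1) :
    ∑ j, (∑ i, w i * A i j) ^ 2 ≤ (((n : ℝ) - 1) / n) * ∑ i, ∑ j, (A i j) ^ 2 := by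
  rcases eq_or_lt_of_le hn with h1 | h2
  · -- n = 1
    subst h1
    have hA : A 0 0 = 0 := by simpa using htr
    simp [Fin.sum_univ_one, hA]
  · -- n ≥ 2
    have hn2 : (2 : ℝ) ≤ (n : ℝ) := by exact_mod_cast h2
    have hnpos : (0 : ℝ) < n := by linarith
    set α : ℝ := ∑ i, ∑ j, w i * A i j * w j with hα
    set b : Fin n → ℝ := fun j => (∑ i, w i * A i j) - α * w j with hb
    set β : ℝ := ∑ j, (b j) ^ 2 with hβ
    set C : Fin n → Fin n → ℝ :=
      fun i j => A i j - α * w i * w j - w i * b j - b i * w j with hC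
    have hAw : ∀ j, ∑ i, w i * A i j = b j + α * w j := by
      intro j; simp [hb]
    have hbw : ∑ j, b j * w j = 0 := by
      have e : ∑ j, b j * w j
          = (∑ j, (∑ i, w i * A i j) * w j) - α * (∑ j, (w j) ^ 2) := by
        rw [Finset.mul_sum, ← Finset.sum_sub_distrib]
        exact Finset.sum_congr rfl fun j _ => by simp [hb]; ring
      have e2 : ∑ j, (∑ i, w i * A i j) * w j = α := by
        rw [hα, Finset.sum_comm]
        exact Finset.sum_congr rfl fun j _ => by
          rw [Finset.sum_mul]
      rw [e, e2, hw]; ring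
    have hrow : ∀ i, ∑ j, A i j * w j = b i + α * w i := by
      intro i; rw [← hAw i]
      exact Finset.sum_congr rfl fun j _ => by rw [hsym i j]; ring
    have hColC : ∀ i, ∑ j, C i j * w j = 0 := by
      intro i
      have e : ∑ j, C i j * w j
          = (∑ j, A i j * w j) - α * w i * (∑ j, (w j) ^ 2)
            - w i * (∑ j, b j * w j) - b i * (∑ j, (w j) ^ 2) := by
        simp only [Finset.mul_sum, ← Finset.sum_sub_distrib]
        exact Finset.sum_congr rfl fun j _ => by simp only [hC]; ring
      rw [e, hrow i, hw, hbw]; ring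
    have hCsym : ∀ i j, C i j = C j i := by
      intro i j; simp only [hC]; rw [hsym i j]; ring
    have hRowC : ∀ j, ∑ i, C i j * w i = 0 := by
      intro j
      rw [← hColC j]
      exact Finset.sum_congr rfl fun i _ => by rw [hCsym i j]
    have htrC : ∑ i, C i i = -α := by
      have e : ∑ i, C i i
          = (∑ i, A i i) - α * (∑ i, (w i) ^ 2) - 2 * (∑ i, b i * w i) := by
        simp only [Finset.mul_sum, ← Finset.sum_sub_distrib]
        exact Finset.sum_congr rfl fun i _ => by simp only [hC]; ring
      rw [e, htr, hw, hbw]; ring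
    -- decomposition of the Frobenius norm
    have hS : ∑ i, ∑ j, (A i j) ^ 2 = (∑ i, ∑ j, (C i j) ^ 2) + α ^ 2 + 2 * β := by
      have key : ∀ i j, (A i j) ^ 2 = (C i j) ^ 2
          + (α ^ 2 * (w i) ^ 2) * ((w j) ^ 2)
          + ((w i) ^ 2) * ((b j) ^ 2)
          + ((b i) ^ 2) * ((w j) ^ 2)
          + (2 * α * w i) * (C i j * w j)
          + C i j * w i * (2 * b j)
          + C i j * w j * (2 * b i)
          + (2 * α * (w i) ^ 2) * (b j * w j)
          + (2 * α * (b i * w i)) * ((w j) ^ 2)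
          + (2 * (b i * w i)) * (b j * w j) := by
        intro i j; simp only [hC]; ring
      have e1 : ∑ i, ∑ j, (A i j) ^ 2
          = (∑ i, ∑ j, (C i j) ^ 2)
          + (∑ i, ∑ j, (α ^ 2 * (w i) ^ 2) * ((w j) ^ 2))
          + (∑ i, ∑ j, ((w i) ^ 2) * ((b j) ^ 2))
          + (∑ i, ∑ j, ((b i) ^ 2) * ((w j) ^ 2))
          + (∑ i, ∑ j, (2 * α * w i) * (C i j * w j))
          + (∑ i, ∑ j, C i j * w i * (2 * b j))
          + (∑ i, ∑ j, C i j * w j * (2 * b i))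
          + (∑ i, ∑ j, (2 * α * (w i) ^ 2) * (b j * w j))
          + (∑ i, ∑ j, (2 * α * (b i * w i)) * ((w j) ^ 2))
          + (∑ i, ∑ j, (2 * (b i * w i)) * (b j * w j)) := by
        simp only [← Finset.sum_add_distrib]
        exact Finset.sum_congr rfl fun i _ => Finset.sum_congr rfl fun j _ => key i j
      have E2 : ∑ i, ∑ j, (α ^ 2 * (w i) ^ 2) * ((w j) ^ 2) = α ^ 2 := by
        rw [kato_sum_factor, hw, ← Finset.mul_sum, hw]; ring
      have E3 : ∑ i, ∑ j, ((w i) ^ 2) * ((b j) ^ 2) = β := by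
        rw [kato_sum_factor, hw, ← hβ]; ring
      have E4 : ∑ i, ∑ j, ((b i) ^ 2) * ((w j) ^ 2) = β := by
        rw [kato_sum_factor, hw, ← hβ]; ring
      have E5 : ∑ i, ∑ j, (2 * α * w i) * (C i j * w j) = 0 := by
        refine Finset.sum_eq_zero fun i _ => ?_
        rw [← Finset.mul_sum, hColC i, mul_zero]
      have E6 : ∑ i, ∑ j, C i j * w i * (2 * b j) = 0 := by
        rw [Finset.sum_comm]
        refine Finset.sum_eq_zero fun j _ => ?_
        rw [← Finset.sum_mul, hRowC j, zero_mul]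
      have E7 : ∑ i, ∑ j, C i j * w j * (2 * b i) = 0 := by
        refine Finset.sum_eq_zero fun i _ => ?_
        rw [← Finset.sum_mul, hColC i, zero_mul]
      have E8 : ∑ i, ∑ j, (2 * α * (w i) ^ 2) * (b j * w j) = 0 := by
        rw [kato_sum_factor, hbw, mul_zero]
      have E9 : ∑ i, ∑ j, (2 * α * (b i * w i)) * ((w j) ^ 2) = 0 := by
        have e : (∑ i, 2 * α * (b i * w i)) = 2 * α * (∑ i, b i * w i) :=
          (Finset.mul_sum _ _ _).symm
        rw [kato_sum_factor, hw, mul_one, e, hbw, mul_zero]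
      have E10 : ∑ i, ∑ j, (2 * (b i * w i)) * (b j * w j) = 0 := by
        rw [kato_sum_factor, hbw, mul_zero]
      rw [e1, E2, E3, E4, E5, E6, E7, E8, E9, E10]; ring
    -- Cauchy–Schwarz against the projection
    set P : Fin n → Fin n → ℝ :=
      fun i j => (if i = j then (1 : ℝ) else 0) - w i * w j with hP
    have hCP : ∑ i, ∑ j, C i j * P i j = -α := by
      have e : ∀ i, ∑ j, C i j * P i j = C i i - (∑ j, C i j * w j) * w i := by
        intro i
        have : ∀ j, C i j * P i j
            = (if i = j then C i j else 0) - C i j * w j * w i := by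
          intro j; simp only [hP, mul_sub, mul_ite, mul_one, mul_zero]; ring_nf
        rw [Finset.sum_congr rfl fun j _ => this j, Finset.sum_sub_distrib,
          Finset.sum_ite_eq, ← Finset.sum_mul]
        simp
      have e2 : ∑ i, ∑ j, C i j * P i j = ∑ i, C i i := by
        refine Finset.sum_congr rfl fun i _ => ?_
        rw [e i, hColC i]; ring
      rw [e2, htrC]
    have hPP : ∑ i, ∑ j, (P i j) ^ 2 = (n : ℝ) - 1 := by
      have e : ∀ i, ∑ j, (P i j) ^ 2 = 1 - (w i) ^ 2 := by
        intro i
        have : ∀ j, (P i j) ^ 2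
            = (if i = j then (1 : ℝ) else 0) - (if i = j then 2 * (w i * w j) else 0)
              + (w i) ^ 2 * (w j) ^ 2 := by
          intro j
          by_cases h : i = j
          · subst h; simp [hP]; ring
          · simp [hP, h]; ring
        rw [Finset.sum_congr rfl fun j _ => this j]
        rw [Finset.sum_add_distrib, Finset.sum_sub_distrib, Finset.sum_ite_eq,
          Finset.sum_ite_eq, ← Finset.mul_sum, hw]
        simp; ring
      rw [Finset.sum_congr rfl fun i _ => e i, Finset.sum_sub_distrib, hw]
      simp [Finset.card_univ]
    have hCS : α ^ 2 ≤ (∑ i, ∑ j, (C i j) ^ 2) * ((n : ℝ) - 1) := by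
      have cs := Finset.sum_mul_sq_le_sq_mul_sq (Finset.univ ×ˢ Finset.univ)
        (fun p : Fin n × Fin n => C p.1 p.2) (fun p : Fin n × Fin n => P p.1 p.2)
      rw [Finset.sum_product, Finset.sum_product, Finset.sum_product] at cs
      rw [hCP, hPP] at cs
      calc α ^ 2 = (-α) ^ 2 := by ring
        _ ≤ _ := cs
    -- conclude
    have hLHS : ∑ j, (∑ i, w i * A i j) ^ 2 = β + α ^ 2 := by
      have e : ∑ j, (∑ i, w i * A i j) ^ 2
          = ∑ j, ((b j) ^ 2 + (2 * α) * (b j * w j) + α ^ 2 * (w j) ^ 2) := by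
        refine Finset.sum_congr rfl fun j _ => ?_
        rw [hAw j]; ring
      rw [e, Finset.sum_add_distrib, Finset.sum_add_distrib, ← Finset.mul_sum, hbw,
        ← Finset.mul_sum, hw, ← hβ]
      ring
    have hβ0 : 0 ≤ β := Finset.sum_nonneg fun j _ => sq_nonneg _
    have hT0 : 0 ≤ ∑ i, ∑ j, (C i j) ^ 2 :=
      Finset.sum_nonneg fun i _ => Finset.sum_nonneg fun j _ => sq_nonneg _
    rw [hLHS, hS, div_mul_eq_mul_div, le_div_iff₀ hnpos]
    nlinarith [mul_nonneg (sub_nonneg.2 hn2) hβ0, hCS, hβ0, hT0]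

open scoped RealInnerProductSpace

/-- Improved Kato inequality for harmonic functions on Euclidean space: if `u`
is `C²` near `x`, harmonic at `x`, and `∇u(x) ≠ 0`, then `y ↦ ‖∇u(y)‖` is
differentiable at `x` and `‖D‖∇u‖(x)‖² ≤ ((n-1)/n)·|D²u(x)|²`. -/
theorem improved_kato_harmonic
    (n : ℕ) (hn : 1 ≤ n)
    (u : EuclideanSpace ℝ (Fin n) → ℝ) (x : EuclideanSpace ℝ (Fin n))
    (hu : ContDiffAt ℝ 2 u x)
    (hharm : ∑ i, iteratedFDeriv ℝ 2 u x
      ![EuclideanSpace.single i (1 : ℝ), EuclideanSpace.single i (1 : ℝ)] = 0)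
    (hgrad : gradient u x ≠ 0) :
    DifferentiableAt ℝ (fun y => ‖gradient u y‖) x ∧
      ‖fderiv ℝ (fun y => ‖gradient u y‖) x‖ ^ 2 ≤
        (((n : ℝ) - 1) / n) *
          ∑ i, ∑ j, (iteratedFDeriv ℝ 2 u x
            ![EuclideanSpace.single i (1 : ℝ), EuclideanSpace.single j (1 : ℝ)]) ^ 2 := by
  classical
  set g : EuclideanSpace ℝ (Fin n) → EuclideanSpace ℝ (Fin n) := gradient u with hgdef
  have hf1 : ContDiffAt ℝ 1 (fderiv ℝ u) x := hu.fderiv_right (by norm_num)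
  have hd2 : DifferentiableAt ℝ (fderiv ℝ u) x := hf1.differentiableAt one_ne_zero
  have hgcomp : g =
      (InnerProductSpace.toDual ℝ (EuclideanSpace ℝ (Fin n))).symm ∘ (fun y => fderiv ℝ u y) :=
    rfl
  have hg : DifferentiableAt ℝ g x := by
    rw [hgcomp]
    exact (InnerProductSpace.toDual ℝ
      (EuclideanSpace ℝ (Fin n))).symm.differentiable.differentiableAt.comp x hd2
  set H := fderiv ℝ g x with hH
  have hHapp : ∀ v, H v =
      (InnerProductSpace.toDual ℝ (EuclideanSpace ℝ (Fin n))).symm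
        (fderiv ℝ (fderiv ℝ u) x v) := by
    intro v
    rw [hH, hgcomp, LinearIsometryEquiv.comp_fderiv]
    rfl
  have hHinner : ∀ v w', ⟪H v, w'⟫ = fderiv ℝ (fderiv ℝ u) x v w' := by
    intro v w'
    rw [hHapp]
    exact InnerProductSpace.toDual_symm_apply
  have hiter : ∀ v w' : EuclideanSpace ℝ (Fin n),
      iteratedFDeriv ℝ 2 u x ![v, w'] = fderiv ℝ (fderiv ℝ u) x v w' := by
    intro v w'
    rw [iteratedFDeriv_two_apply]
    simp
  have hsymH : IsSymmSndFDerivAt ℝ u x := hu.isSymmSndFDerivAt (by simp)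
  set A : Fin n → Fin n → ℝ := fun i j => iteratedFDeriv ℝ 2 u x
      ![EuclideanSpace.single i (1 : ℝ), EuclideanSpace.single j (1 : ℝ)] with hA
  have hAsym : ∀ i j, A i j = A j i := by
    intro i j
    simp only [hA]
    rw [hiter, hiter]
    exact hsymH _ _
  have htrA : ∑ i, A i i = 0 := hharm
  set r := ‖g x‖ with hr
  have hr0 : r ≠ 0 := norm_ne_zero_iff.mpr hgrad
  have hnormsq : ∀ v : EuclideanSpace ℝ (Fin n), ‖v‖ ^ 2 = ∑ i, (v i) ^ 2 := by
    intro v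
    rw [EuclideanSpace.norm_eq, Real.sq_sqrt (by positivity)]
    exact Finset.sum_congr rfl fun i _ => by rw [Real.norm_eq_abs, sq_abs]
  have hinner_sum : ∀ a c : EuclideanSpace ℝ (Fin n), ⟪a, c⟫ = ∑ i, a i * c i := by
    intro a c
    simp [PiLp.inner_apply, RCLike.inner_apply, mul_comm]
  have hF : DifferentiableAt ℝ (fun y => ‖g y‖) x := hg.norm ℝ hgrad
  set φ := fderiv ℝ (fun y => ‖g y‖) x with hφ
  have hsq : (fun y => ⟪g y, g y⟫) = fun y => ‖g y‖ * ‖g y‖ :=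
    funext fun y => real_inner_self_eq_norm_mul_norm _
  have hder1 : ∀ v, fderiv ℝ (fun y => ⟪g y, g y⟫) x v = 2 * ⟪g x, H v⟫ := by
    intro v
    rw [fderiv_inner_apply ℝ hg hg v, real_inner_comm (H v)]
    ring
  have hder2 : ∀ v, fderiv ℝ (fun y => ⟪g y, g y⟫) x v = 2 * r * φ v := by
    intro v
    have h1 : HasFDerivAt (fun y => ‖g y‖ * ‖g y‖) (‖g x‖ • φ + ‖g x‖ • φ) x :=
      hF.hasFDerivAt.mul hF.hasFDerivAt
    rw [hsq, h1.fderiv]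
    simp only [ContinuousLinearMap.add_apply, ContinuousLinearMap.coe_smul',
      Pi.smul_apply, smul_eq_mul, ← hr]
    ring
  have hφv : ∀ v, φ v = ⟪g x, H v⟫ / r := by
    intro v
    have h := (hder1 v).symm.trans (hder2 v)
    have h2 : ⟪g x, H v⟫ = r * φ v := by linarith
    rw [h2, mul_div_cancel_left₀ _ hr0]
  set d : EuclideanSpace ℝ (Fin n) :=
    (InnerProductSpace.toDual ℝ (EuclideanSpace ℝ (Fin n))).symm φ with hd
  have hdj : ∀ j, d j = φ (EuclideanSpace.single j (1 : ℝ)) := by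
    intro j
    have h1 : ⟪d, EuclideanSpace.single j (1 : ℝ)⟫ = φ (EuclideanSpace.single j 1) :=
      InnerProductSpace.toDual_symm_apply
    rw [EuclideanSpace.inner_single_right] at h1
    simpa using h1
  have hφnorm : ‖φ‖ ^ 2 = ∑ j, (φ (EuclideanSpace.single j (1 : ℝ))) ^ 2 := by
    have h1 : ‖φ‖ = ‖d‖ := (LinearIsometryEquiv.norm_map _ _).symm
    rw [h1, hnormsq]
    exact Finset.sum_congr rfl fun j _ => by rw [hdj j]
  have hHcoord : ∀ j i, (H (EuclideanSpace.single j (1 : ℝ))) i = A j i := by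
    intro j i
    have h1 : ⟪H (EuclideanSpace.single j (1 : ℝ)), EuclideanSpace.single i (1 : ℝ)⟫ = A j i := by
      rw [hHinner, hA]
      exact (hiter _ _).symm
    rw [EuclideanSpace.inner_single_right] at h1
    simpa using h1
  set w : Fin n → ℝ := fun i => (g x) i / r with hwdef
  have hw1 : ∑ i, (w i) ^ 2 = 1 := by
    have h1 : ∑ i, ((g x) i) ^ 2 = r ^ 2 := (hnormsq (g x)).symm
    simp only [hwdef, div_pow]
    rw [← Finset.sum_div, h1]
    field_simp
  have hφcoord : ∀ j, φ (EuclideanSpace.single j (1 : ℝ)) = ∑ i, w i * A i j := by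
    intro j
    rw [hφv, hinner_sum, Finset.sum_div]
    refine Finset.sum_congr rfl fun i _ => ?_
    rw [hHcoord j i, ← hAsym i j]
    ring
  refine ⟨hF, ?_⟩
  calc ‖φ‖ ^ 2 = ∑ j, (∑ i, w i * A i j) ^ 2 := by
        rw [hφnorm]
        exact Finset.sum_congr rfl fun j _ => by rw [hφcoord j]
    _ ≤ (((n : ℝ) - 1) / n) * ∑ i, ∑ j, (A i j) ^ 2 :=
        kato_matrix hn A hAsym htrA w hw1
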